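/- Let {c_j}_{j=1}^n be nonnegative reals with max_j c_j ≤ B, and let X₁,…,X_r be sampled uniformly at random without replacement from {c_j}. Set μ = r·(Σⱼ c_j)/n. Then for every η ≥ 0, P(Σᵢ₌₁^r Xᵢ ≥ (1+η) μ) ≤ (e^η/(1+η)^{1+η})^{μ/B}. (Scalar Chernoff bound for sampling without replacement.) -/

import Mathlib

open Finset

variable {α : Type*} [DecidableEq α]

/-- Splitting a sum over `(t+1)`-subsets of `insert x s`. -/
lemma sum_powersetCard_insert (f : α → ℝ) {x : α} {s : Finset α} (hx : x ∉ s) (t : ℕ) :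
    ∑ A ∈ (insert x s).powersetCard (t + 1), ∏ a ∈ A, f a =
      (∑ A ∈ s.powersetCard (t + 1), ∏ a ∈ A, f a) +
        f x * ∑ B ∈ s.powersetCard t, ∏ a ∈ B, f a := by
  rw [Finset.powersetCard_succ_insert hx, Finset.sum_union, Finset.sum_image, Finset.mul_sum]
  · congr 1
    refine Finset.sum_congr rfl fun B hB => ?_
    rw [Finset.mem_powersetCard] at hB
    rw [Finset.prod_insert (fun hxB => hx (hB.1 hxB))]
  · intro B hB C hC h
    rw [Finset.mem_coe, Finset.mem_powersetCard] at hB hC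
    have hxB : x ∉ B := fun hxB => hx (hB.1 hxB)
    have hxC : x ∉ C := fun hxC => hx (hC.1 hxC)
    rw [← Finset.erase_insert hxB, ← Finset.erase_insert hxC, h]
  · rw [Finset.disjoint_left]
    intro A hA hA'
    rw [Finset.mem_powersetCard] at hA
    simp only [Finset.mem_image] at hA'
    obtain ⟨B, hB, rfl⟩ := hA'
    exact hx (hA.1 (Finset.mem_insert_self x B))

/-- Sum over `(t+1)`-subsets containing `j`. -/
lemma sum_powersetCard_mem [Fintype α] (f : α → ℝ) (j : α) (t : ℕ) :
    ∑ A ∈ (Finset.univ.powersetCard (t + 1)).filter (fun A => j ∈ A), ∏ a ∈ A, f a =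
      f j * ∑ B ∈ ((Finset.univ : Finset α).erase j).powersetCard t, ∏ a ∈ B, f a := by
  rw [Finset.mul_sum]
  refine Finset.sum_nbij' (fun A => A.erase j) (fun B => insert j B) ?_ ?_ ?_ ?_ ?_
  · intro A hA
    simp only [Finset.mem_filter, Finset.mem_powersetCard] at hA
    rw [Finset.mem_powersetCard]
    constructor
    · intro a ha
      rw [Finset.mem_erase] at ha ⊢
      exact ⟨ha.1, Finset.mem_univ a⟩
    · rw [Finset.card_erase_of_mem hA.2, hA.1.2]
      rfl
  · intro B hB
    rw [Finset.mem_powersetCard] at hB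
    have hjB : j ∉ B := fun h => (Finset.mem_erase.1 (hB.1 h)).1 rfl
    simp only [Finset.mem_filter, Finset.mem_powersetCard]
    exact ⟨⟨Finset.subset_univ _, by rw [Finset.card_insert_of_notMem hjB, hB.2]⟩,
      Finset.mem_insert_self _ _⟩
  · intro A hA
    simp only [Finset.mem_filter] at hA
    exact Finset.insert_erase hA.2
  · intro B hB
    rw [Finset.mem_powersetCard] at hB
    have hjB : j ∉ B := fun h => (Finset.mem_erase.1 (hB.1 h)).1 rfl
    exact Finset.erase_insert hjB
  · intro A hA
    simp only [Finset.mem_filter] at hA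
    exact (Finset.mul_prod_erase A f hA.2).symm
variable {α : Type*} [DecidableEq α] [Fintype α]

lemma monovary_P (f : α → ℝ) (hf : ∀ a, 0 ≤ f a) (r : ℕ) :
    Monovary (fun j => ∑ A ∈ (Finset.univ.powersetCard r).filter (fun A => j ∈ A),
      ∏ a ∈ A, f a) f := by
  intro j k hjk
  have hne : k ≠ j := fun h => absurd (h ▸ hjk) (lt_irrefl _)
  match r with
  | 0 =>
    dsimp only
    simp only [Finset.powersetCard_zero]
    have : ∀ m : α, ({∅} : Finset (Finset α)).filter (fun A => m ∈ A) = ∅ := by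
      intro m
      ext A
      simp only [Finset.mem_filter, Finset.mem_singleton, Finset.notMem_empty, iff_false]
      rintro ⟨rfl, h⟩
      exact Finset.notMem_empty m h
    rw [this j, this k]
  | t + 1 =>
    dsimp only
    rw [sum_powersetCard_mem f j t, sum_powersetCard_mem f k t]
    have hkj : k ∈ (Finset.univ : Finset α).erase j := Finset.mem_erase.2 ⟨hne, Finset.mem_univ k⟩
    have hjk' : j ∈ (Finset.univ : Finset α).erase k :=
      Finset.mem_erase.2 ⟨fun h => hne h.symm, Finset.mem_univ j⟩
    set u : Finset α := (Finset.univ.erase j).erase k with hu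
    have hknu : k ∉ u := Finset.notMem_erase _ _
    have hjnu : j ∉ u := fun h => Finset.notMem_erase j Finset.univ (Finset.mem_of_mem_erase h)
    have h1 : (Finset.univ : Finset α).erase j = insert k u := (Finset.insert_erase hkj).symm
    have h2 : (Finset.univ : Finset α).erase k = insert j u := by
      rw [hu, Finset.erase_right_comm]
      exact (Finset.insert_erase hjk').symm
    match t with
    | 0 =>
      rw [h1, h2]
      simp only [Finset.powersetCard_zero, Finset.sum_singleton, Finset.prod_empty, mul_one]
      exact le_of_lt hjk
    | m + 1 =>
      rw [h1, h2, sum_powersetCard_insert f hknu m, sum_powersetCard_insert f hjnu m]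
      set D := ∑ A ∈ u.powersetCard (m + 1), ∏ a ∈ A, f a with hD
      set M := ∑ B ∈ u.powersetCard m, ∏ a ∈ B, f a with hM
      have hD0 : 0 ≤ D :=
        Finset.sum_nonneg fun A _ => Finset.prod_nonneg fun a _ => hf a
      nlinarith [hjk.le]

lemma swap_sum (f : α → ℝ) (r : ℕ) :
    ∑ j, f j * ∑ A ∈ (Finset.univ.powersetCard r).filter (fun A => j ∈ A), ∏ a ∈ A, f a =
      ∑ A ∈ Finset.univ.powersetCard r, (∑ a ∈ A, f a) * ∏ a ∈ A, f a := by
  have : ∀ j : α, f j * ∑ A ∈ (Finset.univ.powersetCard r).filter (fun A => j ∈ A),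
      ∏ a ∈ A, f a = ∑ A ∈ Finset.univ.powersetCard r,
        (if j ∈ A then f j * ∏ a ∈ A, f a else 0) := by
    intro j
    rw [Finset.mul_sum, Finset.sum_filter]
  simp_rw [this]
  rw [Finset.sum_comm]
  refine Finset.sum_congr rfl fun A _ => ?_
  rw [Finset.sum_ite_mem, Finset.univ_inter, Finset.sum_mul]

lemma count_sum (f : α → ℝ) (r : ℕ) :
    ∑ j, ∑ A ∈ (Finset.univ.powersetCard r).filter (fun A => j ∈ A), ∏ a ∈ A, f a =
      (r : ℝ) * ∑ A ∈ Finset.univ.powersetCard r, ∏ a ∈ A, f a := by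
  have : ∀ j : α, ∑ A ∈ (Finset.univ.powersetCard r).filter (fun A => j ∈ A),
      ∏ a ∈ A, f a = ∑ A ∈ Finset.univ.powersetCard r,
        (if j ∈ A then ∏ a ∈ A, f a else 0) := fun j => Finset.sum_filter _ _
  simp_rw [this]
  rw [Finset.sum_comm, Finset.mul_sum]
  refine Finset.sum_congr rfl fun A hA => ?_
  rw [Finset.sum_ite_mem, Finset.univ_inter, Finset.sum_const, nsmul_eq_mul]
  rw [Finset.mem_powersetCard] at hA
  rw [hA.2]

/-- Correlation bound: `(r/n) S E_r ≤ ∑_A (∑_A f)(∏_A f)`. -/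
lemma corr_bound (f : α → ℝ) (hf : ∀ a, 0 ≤ f a) (r : ℕ) :
    (r : ℝ) * (∑ j, f j) * ∑ A ∈ Finset.univ.powersetCard r, ∏ a ∈ A, f a ≤
      (Fintype.card α : ℝ) *
        ∑ A ∈ Finset.univ.powersetCard r, (∑ a ∈ A, f a) * ∏ a ∈ A, f a := by
  have h := (monovary_P f hf r).sum_mul_sum_le_card_mul_sum
  rw [count_sum f r] at h
  calc (r : ℝ) * (∑ j, f j) * ∑ A ∈ Finset.univ.powersetCard r, ∏ a ∈ A, f a
      = ((r : ℝ) * ∑ A ∈ Finset.univ.powersetCard r, ∏ a ∈ A, f a) * ∑ j, f j := by ring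
    _ ≤ (Fintype.card α : ℝ) * ∑ j, (∑ A ∈ (Finset.univ.powersetCard r).filter
          (fun A => j ∈ A), ∏ a ∈ A, f a) * f j := h
    _ = (Fintype.card α : ℝ) *
        ∑ A ∈ Finset.univ.powersetCard r, (∑ a ∈ A, f a) * ∏ a ∈ A, f a := by
        rw [← swap_sum f r]
        congr 1
        exact Finset.sum_congr rfl fun j _ => mul_comm _ _

lemma step_identity (f : α → ℝ) (r : ℕ) :
    ∑ A ∈ Finset.univ.powersetCard r, (∏ a ∈ A, f a) * ((∑ j, f j) - ∑ a ∈ A, f a) =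
      ((r : ℝ) + 1) * ∑ C ∈ Finset.univ.powersetCard (r + 1), ∏ a ∈ C, f a := by
  have lhs_eq : ∀ A ∈ Finset.univ.powersetCard r,
      (∏ a ∈ A, f a) * ((∑ j, f j) - ∑ a ∈ A, f a) =
        ∑ x ∈ Finset.univ \ A, ∏ a ∈ insert x A, f a := by
    intro A hA
    rw [Finset.mem_powersetCard] at hA
    rw [← Finset.sum_sdiff_eq_sub (Finset.subset_univ A), Finset.mul_sum]
    refine Finset.sum_congr rfl fun x hx => ?_
    rw [Finset.mem_sdiff] at hx
    rw [Finset.prod_insert hx.2]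
    ring
  rw [Finset.sum_congr rfl lhs_eq]
  have rhs_eq : ∀ C ∈ Finset.univ.powersetCard (r + 1),
      ((r : ℝ) + 1) * ∏ a ∈ C, f a = ∑ x ∈ C, ∏ a ∈ C, f a := by
    intro C hC
    rw [Finset.mem_powersetCard] at hC
    rw [Finset.sum_const, hC.2, nsmul_eq_mul]
    push_cast
    ring
  rw [Finset.mul_sum, Finset.sum_congr rfl rhs_eq]
  rw [Finset.sum_sigma', Finset.sum_sigma']
  refine Finset.sum_nbij' (fun p => (⟨insert p.2 p.1, p.2⟩ : Σ _ : Finset α, α))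
    (fun p => (⟨p.1.erase p.2, p.2⟩ : Σ _ : Finset α, α)) ?_ ?_ ?_ ?_ ?_
  · rintro ⟨A, x⟩ hp
    simp only [Finset.mem_sigma, Finset.mem_powersetCard, Finset.mem_sdiff] at hp ⊢
    exact ⟨⟨Finset.subset_univ _,
      by rw [Finset.card_insert_of_notMem hp.2.2, hp.1.2]⟩, Finset.mem_insert_self _ _⟩
  · rintro ⟨C, x⟩ hp
    simp only [Finset.mem_sigma, Finset.mem_powersetCard, Finset.mem_sdiff] at hp ⊢
    exact ⟨⟨Finset.subset_univ _,
      by rw [Finset.card_erase_of_mem hp.2, hp.1.2]; rfl⟩,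
      Finset.mem_univ _, Finset.notMem_erase _ _⟩
  · rintro ⟨A, x⟩ hp
    simp only [Finset.mem_sigma, Finset.mem_sdiff] at hp
    simp only [Sigma.mk.inj_iff, heq_eq_eq, and_true]
    exact Finset.erase_insert hp.2.2
  · rintro ⟨C, x⟩ hp
    simp only [Finset.mem_sigma] at hp
    simp only [Sigma.mk.inj_iff, heq_eq_eq, and_true]
    exact Finset.insert_erase hp.2
  · rintro ⟨A, x⟩ hp
    rfl

lemma maclaurin (f : α → ℝ) (hf : ∀ a, 0 ≤ f a) :
    ∀ r : ℕ, r ≤ Fintype.card α → 0 < Fintype.card α →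
    ∑ A ∈ Finset.univ.powersetCard r, ∏ a ∈ A, f a ≤
      ((Fintype.card α).choose r : ℝ) * ((∑ j, f j) / (Fintype.card α)) ^ r := by
  intro r
  induction r with
  | zero => intro _ _; simp
  | succ r ih =>
    intro hr hn
    set n := Fintype.card α with hN
    have hr' : r ≤ n := Nat.le_of_succ_le hr
    have hnR : (0 : ℝ) < n := by exact_mod_cast hn
    set S := ∑ j, f j with hS
    set E := ∑ A ∈ Finset.univ.powersetCard r, ∏ a ∈ A, f a with hE
    set E' := ∑ A ∈ Finset.univ.powersetCard (r + 1), ∏ a ∈ A, f a with hE'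
    have hS0 : 0 ≤ S := Finset.sum_nonneg fun j _ => hf j
    have hE0 : 0 ≤ E := Finset.sum_nonneg fun A _ => Finset.prod_nonneg fun a _ => hf a
    have hcorr := corr_bound f hf r
    have hstep := step_identity f r
    have key : ((r : ℝ) + 1) * E' ≤ ((n : ℝ) - r) / n * (S * E) := by
      rw [← hstep]
      have expand : ∑ A ∈ Finset.univ.powersetCard r,
          (∏ a ∈ A, f a) * (S - ∑ a ∈ A, f a) =
          S * E - ∑ A ∈ Finset.univ.powersetCard r, (∑ a ∈ A, f a) * ∏ a ∈ A, f a := by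
        rw [hE, Finset.mul_sum, ← Finset.sum_sub_distrib]
        exact Finset.sum_congr rfl fun A _ => by ring
      rw [expand]
      have h2 : (r : ℝ) * S * E / n ≤
          ∑ A ∈ Finset.univ.powersetCard r, (∑ a ∈ A, f a) * ∏ a ∈ A, f a := by
        rw [div_le_iff₀ hnR]
        calc (r : ℝ) * S * E ≤ (n : ℝ) *
            ∑ A ∈ Finset.univ.powersetCard r, (∑ a ∈ A, f a) * ∏ a ∈ A, f a := hcorr
          _ = _ := by ring
      have : S * E - ∑ A ∈ Finset.univ.powersetCard r, (∑ a ∈ A, f a) * ∏ a ∈ A, f a ≤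
          S * E - (r : ℝ) * S * E / n := by linarith
      calc S * E - ∑ A ∈ Finset.univ.powersetCard r, (∑ a ∈ A, f a) * ∏ a ∈ A, f a
          ≤ S * E - (r : ℝ) * S * E / n := this
        _ = ((n : ℝ) - r) / n * (S * E) := by field_simp
    have ihE : E ≤ (n.choose r : ℝ) * (S / n) ^ r := ih hr' hn
    have hnr0 : (0 : ℝ) ≤ ((n : ℝ) - r) / n := by
      apply div_nonneg _ hnR.le
      have : (r : ℝ) ≤ n := by exact_mod_cast hr'
      linarith
    have key2 : ((r : ℝ) + 1) * E' ≤
        ((n : ℝ) - r) / n * (S * ((n.choose r : ℝ) * (S / n) ^ r)) := by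
      calc ((r : ℝ) + 1) * E' ≤ ((n : ℝ) - r) / n * (S * E) := key
        _ ≤ _ := by
          apply mul_le_mul_of_nonneg_left _ hnr0
          exact mul_le_mul_of_nonneg_left ihE hS0
    have hchoose : ((n.choose (r + 1) : ℝ)) * ((r : ℝ) + 1) = (n.choose r : ℝ) * ((n : ℝ) - r) := by
      have := Nat.choose_succ_right_eq n r
      have hcast : ((n.choose (r + 1) * (r + 1) : ℕ) : ℝ) = ((n.choose r * (n - r) : ℕ) : ℝ) := by
        exact_mod_cast congrArg (Nat.cast : ℕ → ℝ) this
      push_cast [Nat.cast_sub hr'] at hcast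
      linarith
    have hr1 : (0 : ℝ) < (r : ℝ) + 1 := by positivity
    rw [← mul_le_mul_iff_right₀ hr1]
    calc ((r : ℝ) + 1) * E' ≤ ((n : ℝ) - r) / n * (S * ((n.choose r : ℝ) * (S / n) ^ r)) := key2
      _ = ((r : ℝ) + 1) * ((n.choose (r + 1) : ℝ) * (S / n) ^ (r + 1)) := by
        rw [pow_succ]
        linear_combination (-((S / n) ^ r * S / n)) * hchoose

def fiberEquiv {r : ℕ} (A : Finset α) (hA : A.card = r) :
    {e : Fin r ↪ α // Finset.univ.map e = A} ≃ (Fin r ↪ A) where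
  toFun e := ⟨fun i => ⟨e.1 i, by
      have h := Finset.mem_map_of_mem e.1 (Finset.mem_univ i)
      rwa [e.2] at h⟩,
    fun i j h => e.1.injective (congrArg Subtype.val h)⟩
  invFun d := ⟨d.trans (Function.Embedding.subtype _), by
    apply Finset.eq_of_subset_of_card_le
    · intro x hx
      rcases Finset.mem_map.1 hx with ⟨i, _, rfl⟩
      exact (d i).2
    · rw [Finset.card_map, Finset.card_univ, Fintype.card_fin, hA]⟩
  left_inv e := by ext i; rfl
  right_inv d := by ext i; rfl

lemma card_fiber {r : ℕ} (A : Finset α) (hA : A.card = r) :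
    (Finset.univ.filter (fun e : Fin r ↪ α => Finset.univ.map e = A)).card = r.factorial := by
  classical
  rw [← Fintype.card_subtype]
  rw [Fintype.card_congr (fiberEquiv A hA), Fintype.card_embedding_eq, Fintype.card_coe,
    Fintype.card_fin, hA, Nat.descFactorial_self]

lemma sum_embedding_eq (r : ℕ) (g : Finset α → ℝ) :
    ∑ e : Fin r ↪ α, g (Finset.univ.map e) =
      (r.factorial : ℝ) * ∑ A ∈ (Finset.univ : Finset α).powersetCard r, g A := by
  classical
  have maps_to : ∀ e ∈ (Finset.univ : Finset (Fin r ↪ α)),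
      Finset.univ.map e ∈ (Finset.univ : Finset α).powersetCard r := by
    intro e _
    rw [Finset.mem_powersetCard]
    exact ⟨Finset.subset_univ _, by rw [Finset.card_map, Finset.card_univ, Fintype.card_fin]⟩
  rw [← Finset.sum_fiberwise_of_maps_to maps_to (fun e => g (Finset.univ.map e))]
  rw [Finset.mul_sum]
  refine Finset.sum_congr rfl fun A hA => ?_
  rw [Finset.mem_powersetCard] at hA
  have : ∀ e ∈ Finset.univ.filter (fun e : Fin r ↪ α => Finset.univ.map e = A),
      g (Finset.univ.map e) = g A := by
    intro e he
    rw [(Finset.mem_filter.1 he).2]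
  rw [Finset.sum_congr rfl this, Finset.sum_const, card_fiber A hA.2, nsmul_eq_mul]

/-- Scalar Chernoff bound for sampling without replacement: if `0 ≤ c j ≤ B` and
`X₁,…,X_r` are sampled uniformly without replacement from `{c j}` (a uniformly
random injection `Fin r ↪ Fin n`), then with `μ = r (∑ c_j)/n`, for every `η ≥ 0`,
`P(∑ Xᵢ ≥ (1+η)μ) ≤ (e^η/(1+η)^{1+η})^{μ/B}`. -/
theorem scalar_chernoff_without_replacement
    {n : ℕ} (r : ℕ) (hn : 0 < n) (hr : r ≤ n)
    (c : Fin n → ℝ) (B : ℝ) (hc : ∀ j, 0 ≤ c j) (hB : ∀ j, c j ≤ B)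
    (η : ℝ) (hη : 0 ≤ η) :
    (Nat.card {e : Fin r ↪ Fin n //
        (1 + η) * ((r : ℝ) * (∑ j, c j) / n) ≤ ∑ i, c (e i)} : ℝ) ≤
      (Real.exp η / (1 + η) ^ (1 + η)) ^ (((r : ℝ) * (∑ j, c j) / n) / B) *
        (Nat.card (Fin r ↪ Fin n) : ℝ) := by
  classical
  set S := ∑ j, c j with hSdef
  have hS0 : 0 ≤ S := Finset.sum_nonneg fun j _ => hc j
  set μ := (r : ℝ) * S / n with hμdef
  have hNcard : (Nat.card (Fin r ↪ Fin n)) = r.factorial * n.choose r := by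
    rw [Nat.card_eq_fintype_card, Fintype.card_embedding_eq, Fintype.card_fin, Fintype.card_fin,
      Nat.descFactorial_eq_factorial_mul_choose]
  by_cases hS : S = 0
  · have hμ0 : μ = 0 := by rw [hμdef, hS]; simp
    rw [hμ0, zero_div, Real.rpow_zero, one_mul]
    have hle : Nat.card {e : Fin r ↪ Fin n // (1 + η) * (0:ℝ) ≤ ∑ i, c (e i)} ≤
        Nat.card (Fin r ↪ Fin n) := by
      rw [Nat.card_eq_fintype_card, Nat.card_eq_fintype_card]
      exact Fintype.card_subtype_le _
    exact_mod_cast hle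
  · have hSpos : 0 < S := lt_of_le_of_ne hS0 (Ne.symm hS)
    have hBpos : 0 < B := by
      by_contra hB0
      push_neg at hB0
      refine hS (Finset.sum_eq_zero fun j _ => le_antisymm ((hB j).trans hB0) (hc j))
    have h1η : (0:ℝ) < 1 + η := by linarith
    have hnR : (0:ℝ) < n := by exact_mod_cast hn
    set t := Real.log (1 + η) / B with htdef
    have ht0 : 0 ≤ t := div_nonneg (Real.log_nonneg (by linarith)) hBpos.le
    have htB : t * B = Real.log (1 + η) := by rw [htdef, div_mul_cancel₀ _ hBpos.ne']
    have hexp_tB : Real.exp (t * B) = 1 + η := by rw [htB, Real.exp_log h1η]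
    have hμ0 : 0 ≤ μ := by
      rw [hμdef]
      positivity
    set θ := (1 + η) * μ with hθdef
    set P : (Fin r ↪ Fin n) → Prop := fun e => θ ≤ ∑ i, c (e i) with hP
    have hcardP : (Nat.card {e : Fin r ↪ Fin n // P e} : ℝ) =
        ((Finset.univ.filter P).card : ℝ) := by
      rw [Nat.card_eq_fintype_card, Fintype.card_subtype]
    -- Markov step
    have markov : ((Finset.univ.filter P).card : ℝ) * Real.exp (t * θ) ≤
        ∑ e : Fin r ↪ Fin n, Real.exp (t * ∑ i, c (e i)) := by
      calc ((Finset.univ.filter P).card : ℝ) * Real.exp (t * θ)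
          = ∑ _e ∈ Finset.univ.filter P, Real.exp (t * θ) := by
            rw [Finset.sum_const, nsmul_eq_mul]
        _ ≤ ∑ e ∈ Finset.univ.filter P, Real.exp (t * ∑ i, c (e i)) := by
            refine Finset.sum_le_sum fun e he => ?_
            exact Real.exp_le_exp.2
              (mul_le_mul_of_nonneg_left (Finset.mem_filter.1 he).2 ht0)
        _ ≤ ∑ e : Fin r ↪ Fin n, Real.exp (t * ∑ i, c (e i)) :=
            Finset.sum_le_sum_of_subset_of_nonneg (Finset.filter_subset _ _)
              (fun _ _ _ => (Real.exp_pos _).le)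
    -- MGF factorization
    have mgf : ∑ e : Fin r ↪ Fin n, Real.exp (t * ∑ i, c (e i)) =
        (r.factorial : ℝ) *
          ∑ A ∈ (Finset.univ : Finset (Fin n)).powersetCard r, ∏ a ∈ A, Real.exp (t * c a) := by
      have heq : ∀ e : Fin r ↪ Fin n, Real.exp (t * ∑ i, c (e i)) =
          ∏ a ∈ Finset.univ.map e, Real.exp (t * c a) := by
        intro e
        rw [Finset.prod_map, Finset.mul_sum, Real.exp_sum]
      rw [Finset.sum_congr rfl (fun e _ => heq e)]
      exact sum_embedding_eq r (fun A => ∏ a ∈ A, Real.exp (t * c a))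
    -- Maclaurin
    have mac : ∑ A ∈ (Finset.univ : Finset (Fin n)).powersetCard r, ∏ a ∈ A, Real.exp (t * c a) ≤
        (n.choose r : ℝ) * ((∑ j, Real.exp (t * c j)) / n) ^ r := by
      have h := maclaurin (fun a : Fin n => Real.exp (t * c a))
        (fun a => (Real.exp_pos _).le) r (by simp only [Fintype.card_fin]; exact hr)
        (by simp only [Fintype.card_fin]; exact hn)
      simpa using h
    -- averaging bound
    have avg_le : (∑ j, Real.exp (t * c j)) / n ≤ 1 + η * S / (n * B) := by
      have pointwise : ∀ j : Fin n, Real.exp (t * c j) ≤ 1 + η * (c j / B) := by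
        intro j
        have hmem : (0:ℝ) ∈ (Set.univ : Set ℝ) := trivial
        have hmem' : t * B ∈ (Set.univ : Set ℝ) := trivial
        have ha : (0:ℝ) ≤ 1 - c j / B := by
          have : c j / B ≤ 1 := (div_le_one hBpos).2 (hB j)
          linarith
        have hb : (0:ℝ) ≤ c j / B := div_nonneg (hc j) hBpos.le
        have hab : (1 - c j / B) + c j / B = 1 := by ring
        have hconv := convexOn_exp.2 hmem hmem' ha hb hab
        simp only [smul_eq_mul, mul_zero, zero_add, Real.exp_zero, mul_one] at hconv
        have harg : c j / B * (t * B) = t * c j := by field_simp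
        rw [harg, hexp_tB] at hconv
        calc Real.exp (t * c j) ≤ (1 - c j / B) * 1 + c j / B * (1 + η) := by
              simpa using hconv
          _ = 1 + η * (c j / B) := by ring
      have hsum : ∑ j, Real.exp (t * c j) ≤ ∑ j : Fin n, (1 + η * (c j / B)) :=
        Finset.sum_le_sum fun j _ => pointwise j
      have hsum2 : ∑ j : Fin n, (1 + η * (c j / B)) = n + η * S / B := by
        rw [Finset.sum_add_distrib, Finset.sum_const, Finset.card_univ, Fintype.card_fin,
          nsmul_eq_mul, mul_one]
        congr 1
        calc ∑ x : Fin n, η * (c x / B) = ∑ x : Fin n, (η / B) * c x :=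
              Finset.sum_congr rfl (fun x _ => by ring)
          _ = (η / B) * S := by rw [← Finset.mul_sum]
          _ = η * S / B := by ring
      rw [div_le_iff₀ hnR]
      calc ∑ j, Real.exp (t * c j) ≤ n + η * S / B := hsum.trans (le_of_eq hsum2)
        _ = (1 + η * S / (n * B)) * n := by field_simp
    have avg0 : 0 ≤ (∑ j, Real.exp (t * c j)) / n :=
      div_nonneg (Finset.sum_nonneg fun j _ => (Real.exp_pos _).le) hnR.le
    have pow_le : ((∑ j, Real.exp (t * c j)) / n) ^ r ≤ Real.exp (η * μ / B) := by
      have h1 : ((∑ j, Real.exp (t * c j)) / n) ^ r ≤ (1 + η * S / (n * B)) ^ r :=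
        pow_le_pow_left₀ avg0 avg_le r
      have hu : 0 ≤ η * S / (n * B) := by positivity
      have h2 : (1 + η * S / (n * B)) ^ r ≤ Real.exp (η * S / (n * B)) ^ r := by
        apply pow_le_pow_left₀ (by linarith)
        linarith [Real.add_one_le_exp (η * S / (n * B))]
      have h3 : Real.exp (η * S / (n * B)) ^ r = Real.exp ((r : ℝ) * (η * S / (n * B))) := by
        rw [← Real.exp_nat_mul]
      have h4 : (r : ℝ) * (η * S / (n * B)) = η * μ / B := by
        rw [hμdef]; field_simp
      calc ((∑ j, Real.exp (t * c j)) / n) ^ r ≤ (1 + η * S / (n * B)) ^ r := h1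
        _ ≤ Real.exp (η * S / (n * B)) ^ r := h2
        _ = Real.exp (η * μ / B) := by rw [h3, h4]
    -- assemble
    have chain : ((Finset.univ.filter P).card : ℝ) * Real.exp (t * θ) ≤
        (r.factorial : ℝ) * (n.choose r : ℝ) * Real.exp (η * μ / B) := by
      calc ((Finset.univ.filter P).card : ℝ) * Real.exp (t * θ)
          ≤ ∑ e : Fin r ↪ Fin n, Real.exp (t * ∑ i, c (e i)) := markov
        _ = (r.factorial : ℝ) *
            ∑ A ∈ (Finset.univ : Finset (Fin n)).powersetCard r,
              ∏ a ∈ A, Real.exp (t * c a) := mgf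
        _ ≤ (r.factorial : ℝ) * ((n.choose r : ℝ) *
              ((∑ j, Real.exp (t * c j)) / n) ^ r) := by
            apply mul_le_mul_of_nonneg_left mac
            positivity
        _ ≤ (r.factorial : ℝ) * ((n.choose r : ℝ) * Real.exp (η * μ / B)) := by
            apply mul_le_mul_of_nonneg_left _ (by positivity)
            exact mul_le_mul_of_nonneg_left pow_le (by positivity)
        _ = (r.factorial : ℝ) * (n.choose r : ℝ) * Real.exp (η * μ / B) := by ring
    have hfinal : ((Finset.univ.filter P).card : ℝ) ≤
        Real.exp ((η - (1 + η) * Real.log (1 + η)) * (μ / B)) *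
          ((r.factorial : ℝ) * (n.choose r : ℝ)) := by
      have hexp_pos : 0 < Real.exp (t * θ) := Real.exp_pos _
      rw [← le_div_iff₀ hexp_pos] at chain
      have hexpo : η * μ / B - t * θ = (η - (1 + η) * Real.log (1 + η)) * (μ / B) := by
        rw [hθdef, htdef]
        field_simp
      refine chain.trans (le_of_eq ?_)
      rw [← hexpo, Real.exp_sub]
      ring
    -- rewrite RHS
    have hRHS : (Real.exp η / (1 + η) ^ (1 + η)) ^ (μ / B) =
        Real.exp ((η - (1 + η) * Real.log (1 + η)) * (μ / B)) := by
      have hx : (0:ℝ) < Real.exp η / (1 + η) ^ (1 + η) :=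
        div_pos (Real.exp_pos _) (Real.rpow_pos_of_pos h1η _)
      rw [Real.rpow_def_of_pos hx]
      congr 2
      rw [Real.log_div (Real.exp_ne_zero _) (ne_of_gt (Real.rpow_pos_of_pos h1η _)),
        Real.log_exp, Real.log_rpow h1η]
    rw [hcardP, hNcard, hRHS]
    push_cast
    exact hfinal
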